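/- Let H : E → ℝ and k : E → ℝ be differentiable and let Q : E → E be differentiable, and assume the invariance condition: for all x, v ∈ E, (1/2)⟪Q x, ω v⟫ + (1/2)⟪x, ω ((DQ)_x v)⟫ - ⟪gradient H x, Q x⟫ = ⟪gradient k x, v⟫, where (DQ)_x is the Fréchet derivative of Q at x. Define G : E → ℝ by G(x) = (1/2)⟪x, ω (Q x)⟫ - k(x). Then: (a) for every x ∈ E, ω (Q x) = gradient G x, i.e. Q is the Hamiltonian vector field generated by G; and (b) for every x ∈ E, ⟪gradient H x, Q x⟫ = 0, i.e. G Poisson-commutes with H and hence is a conserved quantity. (This is the paper's first Noether theorem: a variation preserving the boundary conditions and preserving the Hamiltonian action up to a total time derivative is generated by a differentiable conserved generator G, here in the time-independent, Hilbert-space form.) -/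

import Mathlib

open RealInnerProductSpace

/-- Noether's theorem, hamiltonian form (time-independent, Hilbert-space version):
a variation `Q` preserving the Hamiltonian action up to a total time derivative `k`
is the Hamiltonian vector field of the generator `G(x) = (1/2)⟪x, ω (Q x)⟫ - k(x)`,
and this generator Poisson-commutes with the Hamiltonian `H`. -/
theorem noether_variation_has_conserved_generator
    {E : Type*} [NormedAddCommGroup E] [InnerProductSpace ℝ E] [CompleteSpace E]
    (ω : E ≃L[ℝ] E)
    (hω : ∀ x y : E, ⟪ω x, y⟫ = -⟪x, ω y⟫)
    (H k : E → ℝ) (hH : Differentiable ℝ H) (hk : Differentiable ℝ k)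
    (Q : E → E) (hQ : Differentiable ℝ Q)
    (hinv : ∀ x v : E,
      (1 / 2 : ℝ) * ⟪Q x, ω v⟫ + (1 / 2 : ℝ) * ⟪x, ω (fderiv ℝ Q x v)⟫
        - ⟪gradient H x, Q x⟫ = ⟪gradient k x, v⟫) :
    (∀ x : E, ω (Q x) = gradient (fun y => (1 / 2 : ℝ) * ⟪y, ω (Q y)⟫ - k y) x) ∧
    (∀ x : E, ⟪gradient H x, Q x⟫ = 0) := by
  have hb : ∀ x : E, ⟪gradient H x, Q x⟫ = 0 := by
    intro x
    have h0 := hinv x 0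
    simpa using h0
  refine ⟨fun x => ?_, hb⟩
  -- derivative of y ↦ ω (Q y)
  have hg : HasFDerivAt (fun y => ω (Q y))
      ((ω : E →L[ℝ] E).comp (fderiv ℝ Q x)) x :=
    ((ω : E →L[ℝ] E).hasFDerivAt).comp x (hQ x).hasFDerivAt
  have hinner := (hasFDerivAt_id x).inner ℝ hg
  have hk' : HasFDerivAt k ((InnerProductSpace.toDual ℝ E) (gradient k x)) x :=
    ((hk x).hasGradientAt).hasFDerivAt
  have hG : HasFDerivAt (fun y => (1 / 2 : ℝ) * ⟪y, ω (Q y)⟫ - k y)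
      ((InnerProductSpace.toDual ℝ E) (ω (Q x))) x := by
    have h := ((hinner.const_mul ((1:ℝ)/2)).sub hk')
    refine (h.congr_of_eventuallyEq (Filter.Eventually.of_forall fun y => rfl)).congr_fderiv ?_
    ext v
    have hi := hinv x v
    have h1 : ⟪ω (Q x), v⟫ = -⟪Q x, ω v⟫ := hω (Q x) v
    have h2 : ⟪v, ω (Q x)⟫ = ⟪ω (Q x), v⟫ := real_inner_comm _ _
    simp only [ContinuousLinearMap.coe_sub', Pi.sub_apply,
      ContinuousLinearMap.coe_comp', Function.comp_apply,
      fderivInnerCLM_apply, ContinuousLinearMap.prod_apply,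
      ContinuousLinearMap.coe_id', id_eq, ContinuousLinearMap.smul_apply,
      smul_eq_mul, InnerProductSpace.toDual_apply_apply, ContinuousLinearEquiv.coe_coe]
    rw [hb x] at hi
    rw [← hi]
    linarith [h1, h2]
  exact ((hasGradientAt_iff_hasFDerivAt).2 hG).gradient.symm
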